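/- Define, for θ > 0, z̃₂(θ) = 6(sinh 2θ − 2θ)²/(cosh 2θ − 1)³ and w̃₀(θ) = (sinh 2θ − 2θ)(sinh 2θ)/(cosh 2θ − 1)². Then lim_{θ→0⁺} (z̃₂(θ) − 4/3)/θ² = −4/5 and lim_{θ→0⁺} (w̃₀(θ) − 2/3)/θ² = 2/15. Consequently lim_{θ→0⁺} (z̃₂(θ) − 4/3)/(w̃₀(θ) − 2/3) = −6, i.e. the k < 0 Friedmann orbit leaves the rest point SM₂ = (4/3, 2/3) tangent to the unstable eigenvector (−9, 3/2) (equivalently (−6, 1)) associated with the positive eigenvalue λ_{A1} = 2/3 of the linearization of the order n = 1 STV ODE at SM₂. -/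

import Mathlib

open Real Set Filter Asymptotics

/-- Leading-order density coefficient of the pressureless `k = −1` Friedmann spacetime. -/
noncomputable def z2F (θ : ℝ) : ℝ :=
  6 * (Real.sinh (2 * θ) - 2 * θ) ^ 2 / (Real.cosh (2 * θ) - 1) ^ 3

/-- Leading-order velocity coefficient of the pressureless `k = −1` Friedmann spacetime. -/
noncomputable def w0F (θ : ℝ) : ℝ :=
  (Real.sinh (2 * θ) - 2 * θ) * Real.sinh (2 * θ) / (Real.cosh (2 * θ) - 1) ^ 2

lemma expTaylorO (n : ℕ) (hn : 0 < n) :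
    (fun x : ℝ => Real.exp x - ∑ m ∈ Finset.range n, x ^ m / m.factorial)
      =O[nhds 0] fun x => x ^ n := by
  rw [Asymptotics.isBigO_iff]
  refine ⟨(n.succ : ℝ) / (n.factorial * n), ?_⟩
  have h1 : ∀ᶠ x : ℝ in nhds 0, |x| ≤ 1 := by
    filter_upwards [Metric.ball_mem_nhds (0 : ℝ) one_pos] with x hx
    rw [Metric.mem_ball, Real.dist_eq, sub_zero] at hx
    exact hx.le
  filter_upwards [h1] with x hx
  calc ‖Real.exp x - ∑ m ∈ Finset.range n, x ^ m / m.factorial‖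
      ≤ |x| ^ n * (n.succ / (n.factorial * n)) := Real.exp_bound hx hn
    _ = (n.succ : ℝ) / (n.factorial * n) * ‖x ^ n‖ := by
        rw [Real.norm_eq_abs, abs_pow]; ring

lemma sinhO : (fun x : ℝ => Real.sinh x - (x + x ^ 3 / 6 + x ^ 5 / 120))
    =O[nhds 0] fun x => x ^ 7 := by
  have h1 := expTaylorO 7 (by norm_num)
  have hneg : Tendsto (fun x : ℝ => -x) (nhds (0:ℝ)) (nhds 0) := by
    simpa using (continuous_neg.tendsto (0:ℝ))
  have h2 := h1.comp_tendsto hneg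
  have h3 : (fun x : ℝ => (-x) ^ 7) =O[nhds (0:ℝ)] fun x => x ^ 7 := by
    apply Asymptotics.IsBigO.of_bound 1
    filter_upwards with x
    simp
  have h4 := (h1.sub (h2.trans h3)).const_mul_left (1/2 : ℝ)
  refine h4.congr_left fun x => ?_
  rw [Real.sinh_eq]
  norm_num [Finset.sum_range_succ, Nat.factorial]
  ring

lemma coshO : (fun x : ℝ => Real.cosh x - (1 + x ^ 2 / 2 + x ^ 4 / 24))
    =O[nhds 0] fun x => x ^ 6 := by
  have h1 := expTaylorO 6 (by norm_num)
  have hneg : Tendsto (fun x : ℝ => -x) (nhds (0:ℝ)) (nhds 0) := by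
    simpa using (continuous_neg.tendsto (0:ℝ))
  have h2 := h1.comp_tendsto hneg
  have h3 : (fun x : ℝ => (-x) ^ 6) =O[nhds (0:ℝ)] fun x => x ^ 6 := by
    apply Asymptotics.IsBigO.of_bound 1
    filter_upwards with x
    simp
  have h4 := (h1.add (h2.trans h3)).const_mul_left (1/2 : ℝ)
  refine h4.congr_left fun x => ?_
  rw [Real.cosh_eq]
  norm_num [Finset.sum_range_succ, Nat.factorial]
  ring

noncomputable def pS (θ : ℝ) : ℝ := 2*θ + (2*θ)^3/6 + (2*θ)^5/120
noncomputable def pC (θ : ℝ) : ℝ := 1 + (2*θ)^2/2 + (2*θ)^4/24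
noncomputable def e1F (θ : ℝ) : ℝ := Real.sinh (2*θ) - pS θ
noncomputable def e2F (θ : ℝ) : ℝ := Real.cosh (2*θ) - pC θ

lemma comp2 {f : ℝ → ℝ} {n : ℕ} (h : f =O[nhds 0] fun x => x ^ n) :
    (fun θ : ℝ => f (2 * θ)) =O[nhds 0] fun θ => θ ^ n := by
  have h2 : Tendsto (fun θ : ℝ => 2 * θ) (nhds (0:ℝ)) (nhds 0) := by
    simpa using (continuous_mul_left (2:ℝ)).tendsto (0:ℝ)
  refine (h.comp_tendsto h2).trans ?_
  apply Asymptotics.IsBigO.of_bound (2 ^ n)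
  filter_upwards with θ
  simp [Real.norm_eq_abs, mul_pow, abs_mul, abs_pow]

lemma powO {a b : ℕ} (h : b ≤ a) : (fun θ : ℝ => θ ^ a) =O[nhds 0] fun θ => θ ^ b := by
  rcases eq_or_lt_of_le h with rfl | h
  · exact isBigO_refl _ _
  · exact (isLittleO_pow_pow h).isBigO

lemma mulO {f g : ℝ → ℝ} {a b n : ℕ} (hf : f =O[nhds 0] fun θ => θ ^ a)
    (hg : g =O[nhds 0] fun θ => θ ^ b) (hab : n = a + b) :
    (fun θ => f θ * g θ) =O[nhds 0] fun θ : ℝ => θ ^ n := by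
  subst hab
  exact (hf.mul hg).congr (fun _ => rfl) fun x => (pow_add x a b).symm

lemma polyO (n : ℕ) (q : ℝ → ℝ) (hq : Continuous q) :
    (fun θ : ℝ => θ ^ n * q θ) =O[nhds 0] fun θ => θ ^ n :=
  ((isBigO_refl (fun θ : ℝ => θ ^ n) (nhds 0)).mul ((hq.tendsto 0).isBigO_one ℝ)).congr
    (fun _ => rfl) fun x => mul_one _

lemma hE1 : e1F =O[nhds 0] fun θ : ℝ => θ ^ 7 := comp2 sinhO

lemma hE2 : e2F =O[nhds 0] fun θ : ℝ => θ ^ 6 := comp2 coshO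

lemma ZO : (fun θ : ℝ => 6*(Real.sinh (2*θ) - 2*θ)^2 - 4/3*(Real.cosh (2*θ) - 1)^3 + 32/5*θ^8)
    =o[nhds 0] fun θ => θ ^ 8 := by
  have h1 : (fun θ : ℝ => 12*(θ^3*(4/3 + 4/15*θ^2) * e1F θ)) =O[nhds 0] fun θ => θ^10 :=
    (mulO (polyO 3 _ (by continuity)) hE1 (by norm_num)).const_mul_left 12
  have h2 : (fun θ : ℝ => 6*(e1F θ * e1F θ)) =O[nhds 0] fun θ => θ^10 :=
    ((mulO (n := 14) hE1 hE1 (by norm_num)).trans (powO (by norm_num))).const_mul_left 6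
  have h3 : (fun θ : ℝ => -4*(θ^2*(2 + 2/3*θ^2) * (θ^2*(2 + 2/3*θ^2) * e2F θ)))
      =O[nhds 0] fun θ => θ^10 :=
    (mulO (polyO 2 _ (by continuity)) (mulO (n := 8) (polyO 2 _ (by continuity)) hE2 (by norm_num))
      (by norm_num)).const_mul_left (-4)
  have h4 : (fun θ : ℝ => -4*(θ^2*(2 + 2/3*θ^2) * (e2F θ * e2F θ)))
      =O[nhds 0] fun θ => θ^10 :=
    ((mulO (n := 14) (polyO 2 _ (by continuity)) (mulO (n := 12) hE2 hE2 (by norm_num))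
      (by norm_num)).trans (powO (by norm_num))).const_mul_left (-4)
  have h5 : (fun θ : ℝ => -(4/3)*(e2F θ * (e2F θ * e2F θ))) =O[nhds 0] fun θ => θ^10 :=
    ((mulO (n := 18) hE2 (mulO (n := 12) hE2 hE2 (by norm_num)) (by norm_num)).trans
      (powO (by norm_num))).const_mul_left (-(4/3))
  have h6 : (fun θ : ℝ => θ^10*(-704/225 - 32/81*θ^2)) =O[nhds 0] fun θ => θ^10 :=
    polyO 10 _ (by continuity)
  have hsum := ((((h1.add h2).add h3).add h4).add h5).add h6
  have heq : (fun θ : ℝ => 6*(Real.sinh (2*θ) - 2*θ)^2 - 4/3*(Real.cosh (2*θ) - 1)^3 + 32/5*θ^8)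
      = fun θ : ℝ => 12*(θ^3*(4/3 + 4/15*θ^2) * e1F θ) + 6*(e1F θ * e1F θ)
        + -4*(θ^2*(2 + 2/3*θ^2) * (θ^2*(2 + 2/3*θ^2) * e2F θ))
        + -4*(θ^2*(2 + 2/3*θ^2) * (e2F θ * e2F θ))
        + -(4/3)*(e2F θ * (e2F θ * e2F θ))
        + θ^10*(-704/225 - 32/81*θ^2) := by
    funext θ
    simp only [e1F, e2F, pS, pC]
    ring
  rw [heq]
  exact hsum.trans_isLittleO (isLittleO_pow_pow (by norm_num))

lemma WO : (fun θ : ℝ => (Real.sinh (2*θ) - 2*θ)*Real.sinh (2*θ)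
      - 2/3*(Real.cosh (2*θ) - 1)^2 - 8/15*θ^6)
    =o[nhds 0] fun θ => θ ^ 6 := by
  have h1 : (fun θ : ℝ => θ^3*(4/3 + 4/15*θ^2) * e1F θ) =O[nhds 0] fun θ => θ^8 :=
    (mulO (n := 10) (polyO 3 _ (by continuity)) hE1 (by norm_num)).trans (powO (by norm_num))
  have h2 : (fun θ : ℝ => e1F θ * (θ^1*(2 + 4/3*θ^2 + 4/15*θ^4))) =O[nhds 0] fun θ => θ^8 :=
    mulO hE1 (polyO 1 _ (by continuity)) (by norm_num)
  have h3 : (fun θ : ℝ => e1F θ * e1F θ) =O[nhds 0] fun θ => θ^8 :=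
    (mulO (n := 14) hE1 hE1 (by norm_num)).trans (powO (by norm_num))
  have h4 : (fun θ : ℝ => -(4/3)*(θ^2*(2 + 2/3*θ^2) * e2F θ)) =O[nhds 0] fun θ => θ^8 :=
    (mulO (polyO 2 _ (by continuity)) hE2 (by norm_num)).const_mul_left (-(4/3))
  have h5 : (fun θ : ℝ => -(2/3)*(e2F θ * e2F θ)) =O[nhds 0] fun θ => θ^8 :=
    ((mulO (n := 12) hE2 hE2 (by norm_num)).trans (powO (by norm_num))).const_mul_left (-(2/3))
  have h6 : (fun θ : ℝ => θ^8*(56/135 + 16/225*θ^2)) =O[nhds 0] fun θ => θ^8 :=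
    polyO 8 _ (by continuity)
  have hsum := ((((h1.add h2).add h3).add h4).add h5).add h6
  have heq : (fun θ : ℝ => (Real.sinh (2*θ) - 2*θ)*Real.sinh (2*θ)
        - 2/3*(Real.cosh (2*θ) - 1)^2 - 8/15*θ^6)
      = fun θ : ℝ => θ^3*(4/3 + 4/15*θ^2) * e1F θ + e1F θ * (θ^1*(2 + 4/3*θ^2 + 4/15*θ^4))
        + e1F θ * e1F θ
        + -(4/3)*(θ^2*(2 + 2/3*θ^2) * e2F θ)
        + -(2/3)*(e2F θ * e2F θ)
        + θ^8*(56/135 + 16/225*θ^2) := by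
    funext θ
    simp only [e1F, e2F, pS, pC]
    ring
  rw [heq]
  exact hsum.trans_isLittleO (isLittleO_pow_pow (by norm_num))

lemma BO : (fun θ : ℝ => Real.cosh (2*θ) - 1 - 2*θ^2) =o[nhds 0] fun θ => θ ^ 2 := by
  have h1 : (fun θ : ℝ => e2F θ) =O[nhds 0] fun θ => θ^3 := hE2.trans (powO (by norm_num))
  have h2 : (fun θ : ℝ => θ^3*((2/3)*θ)) =O[nhds 0] fun θ => θ^3 :=
    polyO 3 _ (by continuity)
  have hsum := h1.add h2
  have heq : (fun θ : ℝ => Real.cosh (2*θ) - 1 - 2*θ^2)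
      = fun θ : ℝ => e2F θ + θ^3*((2/3)*θ) := by
    funext θ
    simp only [e2F, pC]
    ring
  rw [heq]
  exact hsum.trans_isLittleO (isLittleO_pow_pow (by norm_num))

/-- The `k < 0` Friedmann orbit leaves `SM₂ = (4/3, 2/3)` tangent to the unstable
eigenvector `(−9, 3/2)` (equivalently `(−6, 1)`) of the linearization at `SM₂`. -/
theorem k_neg_orbit_tangent_to_unstable_eigenvector :
    Tendsto (fun θ => (z2F θ - 4 / 3) / θ ^ 2) (nhdsWithin 0 (Ioi 0))
      (nhds (-4 / 5 : ℝ)) ∧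
    Tendsto (fun θ => (w0F θ - 2 / 3) / θ ^ 2) (nhdsWithin 0 (Ioi 0))
      (nhds (2 / 15 : ℝ)) ∧
    Tendsto (fun θ => (z2F θ - 4 / 3) / (w0F θ - 2 / 3)) (nhdsWithin 0 (Ioi 0))
      (nhds (-6 : ℝ)) := by
  -- numerator limits
  have hN : Tendsto (fun θ : ℝ =>
      (6*(Real.sinh (2*θ) - 2*θ)^2 - 4/3*(Real.cosh (2*θ) - 1)^3)/θ^8)
      (nhdsWithin 0 (Ioi 0)) (nhds (-(32/5))) := by
    have h0 := (ZO.tendsto_div_nhds_zero).mono_left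
      (nhdsWithin_le_nhds : nhdsWithin (0:ℝ) (Ioi 0) ≤ nhds 0)
    have h1 := h0.sub_const (32/5)
    rw [zero_sub] at h1
    apply Filter.Tendsto.congr' _ h1
    filter_upwards [self_mem_nhdsWithin] with θ hθ
    have h8 : θ^8 ≠ 0 := pow_ne_zero _ (ne_of_gt hθ)
    have hθ0 : θ ≠ 0 := ne_of_gt hθ
    field_simp
    ring
  have hM : Tendsto (fun θ : ℝ =>
      ((Real.sinh (2*θ) - 2*θ)*Real.sinh (2*θ) - 2/3*(Real.cosh (2*θ) - 1)^2)/θ^6)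
      (nhdsWithin 0 (Ioi 0)) (nhds (8/15)) := by
    have h0 := (WO.tendsto_div_nhds_zero).mono_left
      (nhdsWithin_le_nhds : nhdsWithin (0:ℝ) (Ioi 0) ≤ nhds 0)
    have h1 := h0.add_const (8/15)
    rw [zero_add] at h1
    apply Filter.Tendsto.congr' _ h1
    filter_upwards [self_mem_nhdsWithin] with θ hθ
    have h6 : θ^6 ≠ 0 := pow_ne_zero _ (ne_of_gt hθ)
    have hθ0 : θ ≠ 0 := ne_of_gt hθ
    field_simp
    ring
  have hB2 : Tendsto (fun θ : ℝ => (Real.cosh (2*θ) - 1)/θ^2)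
      (nhdsWithin 0 (Ioi 0)) (nhds 2) := by
    have h0 := (BO.tendsto_div_nhds_zero).mono_left
      (nhdsWithin_le_nhds : nhdsWithin (0:ℝ) (Ioi 0) ≤ nhds 0)
    have h1 := h0.add_const 2
    rw [zero_add] at h1
    apply Filter.Tendsto.congr' _ h1
    filter_upwards [self_mem_nhdsWithin] with θ hθ
    have h2 : θ^2 ≠ 0 := pow_ne_zero _ (ne_of_gt hθ)
    rw [sub_div, mul_div_assoc, div_self h2]; ring
  have hcosh : ∀ θ : ℝ, 0 < θ → Real.cosh (2*θ) - 1 ≠ 0 := by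
    intro θ hθ
    have h2 : (1:ℝ) < Real.cosh (2*θ) := Real.one_lt_cosh.mpr (by positivity)
    linarith
  -- first limit
  have hz : Tendsto (fun θ => (z2F θ - 4 / 3) / θ ^ 2) (nhdsWithin 0 (Ioi 0))
      (nhds (-4 / 5 : ℝ)) := by
    have hd := hN.div (hB2.pow 3) (by norm_num)
    have hval : (-(32/5) / 2^3 : ℝ) = -4/5 := by norm_num
    rw [hval] at hd
    apply Filter.Tendsto.congr' _ hd
    filter_upwards [self_mem_nhdsWithin] with θ hθ
    have hθ0 : (θ:ℝ) ≠ 0 := ne_of_gt hθ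
    have hc := hcosh θ hθ
    simp only [z2F, Pi.div_apply, Pi.pow_apply]
    field_simp
  -- second limit
  have hw : Tendsto (fun θ => (w0F θ - 2 / 3) / θ ^ 2) (nhdsWithin 0 (Ioi 0))
      (nhds (2 / 15 : ℝ)) := by
    have hd := hM.div (hB2.pow 2) (by norm_num)
    have hval : ((8/15) / 2^2 : ℝ) = 2/15 := by norm_num
    rw [hval] at hd
    apply Filter.Tendsto.congr' _ hd
    filter_upwards [self_mem_nhdsWithin] with θ hθ
    have hθ0 : (θ:ℝ) ≠ 0 := ne_of_gt hθ
    have hc := hcosh θ hθ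
    simp only [w0F, Pi.div_apply, Pi.pow_apply]
    field_simp
  refine ⟨hz, hw, ?_⟩
  have hd := hz.div hw (by norm_num)
  have hval : ((-4/5) / (2/15) : ℝ) = -6 := by norm_num
  rw [hval] at hd
  apply Filter.Tendsto.congr' _ hd
  filter_upwards [self_mem_nhdsWithin] with θ hθ
  have hθ0 : θ^2 ≠ 0 := pow_ne_zero _ (ne_of_gt hθ)
  rcases eq_or_ne (w0F θ - 2/3) 0 with h | h
  · simp [h]
  · simp only [Pi.div_apply]
    field_simp
    rw [mul_comm θ, mul_div_mul_right _ _ (ne_of_gt hθ)]
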